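/- Let n ≥ 3 and let a ∈ Sym(n,ℂ) with real part Re(a) positive definite. Define p(ξ) = aξ·ξ (bilinear) for ξ ∈ ℂⁿ. Then for ξ, N ∈ ℝⁿ \ {0}, the quadratic polynomial τ ↦ p(ξ + τN) in the complex variable τ never admits a double root τ₀ unless ξ + τ₀N = 0. -/

import Mathlib

open scoped BigOperators

/-- (Lemma 4.2, case `n ≥ 3`.) Let `a` be a complex symmetric matrix whose real part is positive
definite, and `p(ξ) = aξ·ξ` (bilinear). For nonzero `ξ, N ∈ ℝⁿ`, the quadratic polynomial
`τ ↦ p(ξ + τN)` never admits a double root `τ₀` unless `ξ + τ₀N = 0`. -/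
theorem no_double_root_dim_ge_three
    {n : ℕ} (hn : 3 ≤ n) (a : Matrix (Fin n) (Fin n) ℂ)
    (ha_symm : ∀ i j, a i j = a j i)
    (ha_pos : ∀ ξ : Fin n → ℝ, ξ ≠ 0 → 0 < ∑ i, ∑ j, (a i j).re * ξ i * ξ j)
    (ξ N : Fin n → ℝ) (hξ : ξ ≠ 0) (hN : N ≠ 0) (τ₀ : ℂ)
    (hroot : (∑ i, ∑ j, a i j * ((ξ i : ℂ) + τ₀ * (N i : ℂ)) * ((ξ j : ℂ) + τ₀ * (N j : ℂ))) = 0)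
    (hdouble : deriv (fun τ : ℂ =>
      ∑ i, ∑ j, a i j * ((ξ i : ℂ) + τ * (N i : ℂ)) * ((ξ j : ℂ) + τ * (N j : ℂ))) τ₀ = 0) :
    ∀ i, (ξ i : ℂ) + τ₀ * (N i : ℂ) = 0 := by
  set u : ℝ := τ₀.re with hu
  set v : ℝ := τ₀.im with hv
  set z : Fin n → ℂ := fun i => (ξ i : ℂ) + τ₀ * N i with hz
  -- derivative computation
  have key : HasDerivAt (fun τ : ℂ =>
      ∑ i, ∑ j, a i j * ((ξ i : ℂ) + τ * (N i : ℂ)) * ((ξ j : ℂ) + τ * (N j : ℂ)))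
      (∑ i, ∑ j, (a i j * (N i : ℂ) * z j + a i j * z i * (N j : ℂ))) τ₀ := by
    apply HasDerivAt.fun_sum
    intro i _
    apply HasDerivAt.fun_sum
    intro j _
    have h1 : HasDerivAt (fun τ : ℂ => (ξ i : ℂ) + τ * N i) ((N i : ℂ)) τ₀ := by
      simpa using (((hasDerivAt_id τ₀).mul_const ((N i : ℂ))).const_add ((ξ i : ℂ)))
    have h2 : HasDerivAt (fun τ : ℂ => (ξ j : ℂ) + τ * N j) ((N j : ℂ)) τ₀ := by
      simpa using (((hasDerivAt_id τ₀).mul_const ((N j : ℂ))).const_add ((ξ j : ℂ)))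
    exact (h1.const_mul (a i j)).mul h2
  have hD : (∑ i, ∑ j, (a i j * (N i : ℂ) * z j + a i j * z i * (N j : ℂ))) = 0 := by
    rw [← key.deriv]; exact hdouble
  have hroot' : ∑ i, ∑ j, a i j * z i * z j = 0 := hroot
  set w : Fin n → ℝ := fun i => ξ i + u * N i with hw
  have hτ : τ₀ = (u : ℂ) + (v : ℂ) * Complex.I := (Complex.re_add_im τ₀).symm
  have hwz : ∀ i, ((w i : ℝ) : ℂ) = z i - (v : ℂ) * Complex.I * N i := by
    intro i
    simp only [hw, hz]
    push_cast
    rw [hτ]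
    ring
  have hc : ((v : ℂ) * Complex.I) ^ 2 = -((v : ℂ) ^ 2) := by
    rw [mul_pow, Complex.I_sq]; ring
  have hS : ∑ i, ∑ j, a i j * ((w i : ℝ) : ℂ) * ((w j : ℝ) : ℂ)
      = -((v : ℂ) ^ 2) * ∑ i, ∑ j, a i j * (N i : ℂ) * (N j : ℂ) := by
    have expand : ∀ i j, a i j * ((w i : ℝ) : ℂ) * ((w j : ℝ) : ℂ)
        = a i j * z i * z j
          - (v : ℂ) * Complex.I * (a i j * (N i : ℂ) * z j + a i j * z i * (N j : ℂ))
          + (-((v : ℂ) ^ 2)) * (a i j * (N i : ℂ) * (N j : ℂ)) := by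
      intro i j
      rw [hwz i, hwz j, ← hc]
      ring
    have hD' : (∑ i, ∑ j, a i j * (N i : ℂ) * z j) + (∑ i, ∑ j, a i j * z i * (N j : ℂ)) = 0 := by
      simpa [Finset.sum_add_distrib] using hD
    simp only [expand]
    simp only [Finset.sum_add_distrib, Finset.sum_sub_distrib, ← Finset.mul_sum]
    rw [hroot', hD']
    ring
  have hre : ∑ i, ∑ j, (a i j).re * w i * w j
      = -(v ^ 2) * ∑ i, ∑ j, (a i j).re * N i * N j := by
    have h := congrArg Complex.re hS
    simp only [Complex.re_sum, Complex.mul_re, Complex.ofReal_re, Complex.ofReal_im,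
      ← Complex.ofReal_pow, Complex.neg_re, Complex.neg_im, mul_zero, zero_mul,
      sub_zero, neg_zero, neg_mul, Finset.mul_sum] at h
    simpa [Finset.mul_sum, neg_mul] using h
  have hA : 0 < ∑ i, ∑ j, (a i j).re * N i * N j := ha_pos N hN
  have hw0 : w = 0 := by
    by_contra h
    have hpos := ha_pos w h
    nlinarith [sq_nonneg v]
  have hzero : ∑ i, ∑ j, (a i j).re * w i * w j = 0 := by
    simp [hw0]
  have hv0 : v = 0 := by
    rw [hzero] at hre
    have h2 : v ^ 2 = 0 := by
      by_contra h
      have : -(v ^ 2) * ∑ i, ∑ j, (a i j).re * N i * N j < 0 := by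
        apply mul_neg_of_neg_of_pos _ hA
        have := sq_nonneg v
        cases' lt_or_eq_of_le this with h' h'
        · linarith
        · exact absurd h'.symm h
      linarith [hre]
    exact pow_eq_zero_iff (n := 2) (by norm_num) |>.mp h2
  intro i
  have hwi : w i = 0 := congrFun hw0 i
  have hτu : τ₀ = (u : ℂ) := by
    rw [hτ, hv0]; simp
  rw [hτu]
  have : ((w i : ℝ) : ℂ) = 0 := by rw [hwi]; simp
  simpa [hw] using this
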